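/- (Simulation lemma / value difference bound) Let M1 and M2 be two finite MDPs on the same state-action space with discount γ ∈ [0,1), rewards bounded by 0 ≤ R_i(s,a) ≤ R_max, and suppose for all (s,a): |R1(s,a) - R2(s,a)| ≤ ε1 and ‖P1(·|s,a) - P2(·|s,a)‖₁ ≤ ε2. Then for any stationary policy π and any state s, |V1^π(s) - V2^π(s)| ≤ (ε1 + γ R_max ε2)/(1-γ)². -/

import Mathlib

/-- Simulation lemma: closeness of rewards and transitions implies closeness of values. -/
theorem simulation_lemma {S A : Type} [Fintype S] (γ Rmax ε1 ε2 : ℝ)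
    (hγ0 : 0 ≤ γ) (hγ1 : γ < 1)
    (P1 P2 : S → A → S → ℝ) (R1 R2 : S → A → ℝ) (π : S → A)
    (hP1 : ∀ s a, (∀ s', 0 ≤ P1 s a s') ∧ ∑ s', P1 s a s' = 1)
    (hP2 : ∀ s a, (∀ s', 0 ≤ P2 s a s') ∧ ∑ s', P2 s a s' = 1)
    (hR1 : ∀ s a, 0 ≤ R1 s a ∧ R1 s a ≤ Rmax)
    (hR2 : ∀ s a, 0 ≤ R2 s a ∧ R2 s a ≤ Rmax)
    (hεR : ∀ s a, |R1 s a - R2 s a| ≤ ε1)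
    (hεP : ∀ s a, ∑ s', |P1 s a s' - P2 s a s'| ≤ ε2)
    (V1 V2 : S → ℝ)
    (hV1 : ∀ s, V1 s = R1 s (π s) + γ * ∑ s', P1 s (π s) s' * V1 s')
    (hV2 : ∀ s, V2 s = R2 s (π s) + γ * ∑ s', P2 s (π s) s' * V2 s') :
    ∀ s, |V1 s - V2 s| ≤ (ε1 + γ * Rmax * ε2) / (1 - γ) ^ 2 := by
  intro s
  haveI : Nonempty S := ⟨s⟩
  have hne : (Finset.univ : Finset S).Nonempty := Finset.univ_nonempty
  have hε1 : 0 ≤ ε1 := le_trans (abs_nonneg _) (hεR s (π s))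
  have hε2 : 0 ≤ ε2 :=
    le_trans (Finset.sum_nonneg fun _ _ => abs_nonneg _) (hεP s (π s))
  have h1γ : 0 < 1 - γ := by linarith
  have hRmax : 0 ≤ Rmax := le_trans (hR1 s (π s)).1 (hR1 s (π s)).2
  -- bound on |V1|
  set B := Finset.univ.sup' hne (fun t => |V1 t|) with hBdef
  have hB_mem : ∀ t, |V1 t| ≤ B := fun t => Finset.le_sup' (fun t => |V1 t|) (Finset.mem_univ t)
  have hBstep : ∀ t : S, |V1 t| ≤ Rmax + γ * B := by
    intro t
    rw [hV1 t]
    have hs1 : |∑ s', P1 t (π t) s' * V1 s'| ≤ B := by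
      calc |∑ s', P1 t (π t) s' * V1 s'| ≤ ∑ s', |P1 t (π t) s' * V1 s'| :=
            Finset.abs_sum_le_sum_abs _ _
        _ ≤ ∑ s', P1 t (π t) s' * B := by
            refine Finset.sum_le_sum fun i _ => ?_
            rw [abs_mul, abs_of_nonneg ((hP1 t (π t)).1 i)]
            exact mul_le_mul_of_nonneg_left (hB_mem i) ((hP1 t (π t)).1 i)
        _ = B := by rw [← Finset.sum_mul, (hP1 t (π t)).2, one_mul]
    calc |R1 t (π t) + γ * ∑ s', P1 t (π t) s' * V1 s'|
        ≤ |R1 t (π t)| + |γ * ∑ s', P1 t (π t) s' * V1 s'| := abs_add_le _ _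
      _ ≤ Rmax + γ * B := by
          rw [abs_mul, abs_of_nonneg hγ0, abs_of_nonneg (hR1 t (π t)).1]
          exact add_le_add (hR1 t (π t)).2 (mul_le_mul_of_nonneg_left hs1 hγ0)
  have hBle : B ≤ Rmax + γ * B := Finset.sup'_le _ _ fun t _ => hBstep t
  have hB : B ≤ Rmax / (1 - γ) := by
    rw [le_div_iff₀ h1γ]; nlinarith
  have hB_mem' : ∀ t, |V1 t| ≤ Rmax / (1 - γ) := fun t => le_trans (hB_mem t) hB
  -- bound on |V1 - V2|
  set M := Finset.univ.sup' hne (fun t => |V1 t - V2 t|) with hMdef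
  have hM_mem : ∀ t, |V1 t - V2 t| ≤ M := fun t => Finset.le_sup' (fun t => |V1 t - V2 t|) (Finset.mem_univ t)
  have hMstep : ∀ t : S, |V1 t - V2 t| ≤ ε1 + γ * (Rmax / (1 - γ) * ε2) + γ * M := by
    intro t
    have key : V1 t - V2 t =
        (R1 t (π t) - R2 t (π t))
        + γ * (∑ s', (P1 t (π t) s' - P2 t (π t) s') * V1 s')
        + γ * (∑ s', P2 t (π t) s' * (V1 s' - V2 s')) := by
      have hsum : ∑ s', (P1 t (π t) s' - P2 t (π t) s') * V1 s'
          + ∑ s', P2 t (π t) s' * (V1 s' - V2 s')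
          = ∑ s', P1 t (π t) s' * V1 s' - ∑ s', P2 t (π t) s' * V2 s' := by
        rw [← Finset.sum_add_distrib, ← Finset.sum_sub_distrib]
        exact Finset.sum_congr rfl fun i _ => by ring
      rw [hV1 t, hV2 t]
      linear_combination -γ * hsum
    have h2 : |∑ s', (P1 t (π t) s' - P2 t (π t) s') * V1 s'| ≤ Rmax / (1 - γ) * ε2 := by
      calc |∑ s', (P1 t (π t) s' - P2 t (π t) s') * V1 s'|
          ≤ ∑ s', |(P1 t (π t) s' - P2 t (π t) s') * V1 s'| := Finset.abs_sum_le_sum_abs _ _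
        _ ≤ ∑ s', |P1 t (π t) s' - P2 t (π t) s'| * (Rmax / (1 - γ)) := by
            refine Finset.sum_le_sum fun i _ => ?_
            rw [abs_mul]
            exact mul_le_mul_of_nonneg_left (hB_mem' i) (abs_nonneg _)
        _ = (∑ s', |P1 t (π t) s' - P2 t (π t) s'|) * (Rmax / (1 - γ)) := by
            rw [Finset.sum_mul]
        _ ≤ ε2 * (Rmax / (1 - γ)) := by
            exact mul_le_mul_of_nonneg_right (hεP t (π t)) (div_nonneg hRmax h1γ.le)
        _ = Rmax / (1 - γ) * ε2 := by ring
    have h3 : |∑ s', P2 t (π t) s' * (V1 s' - V2 s')| ≤ M := by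
      calc |∑ s', P2 t (π t) s' * (V1 s' - V2 s')|
          ≤ ∑ s', |P2 t (π t) s' * (V1 s' - V2 s')| := Finset.abs_sum_le_sum_abs _ _
        _ ≤ ∑ s', P2 t (π t) s' * M := by
            refine Finset.sum_le_sum fun i _ => ?_
            rw [abs_mul, abs_of_nonneg ((hP2 t (π t)).1 i)]
            exact mul_le_mul_of_nonneg_left (hM_mem i) ((hP2 t (π t)).1 i)
        _ = M := by rw [← Finset.sum_mul, (hP2 t (π t)).2, one_mul]
    calc |V1 t - V2 t|
        ≤ |R1 t (π t) - R2 t (π t)|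
          + |γ * (∑ s', (P1 t (π t) s' - P2 t (π t) s') * V1 s')|
          + |γ * (∑ s', P2 t (π t) s' * (V1 s' - V2 s'))| := by
          rw [key]; exact le_trans (abs_add_le _ _) (add_le_add_left (abs_add_le _ _) _)
      _ ≤ ε1 + γ * (Rmax / (1 - γ) * ε2) + γ * M := by
          rw [abs_mul, abs_mul, abs_of_nonneg hγ0]
          exact add_le_add (add_le_add (hεR t (π t))
            (mul_le_mul_of_nonneg_left h2 hγ0)) (mul_le_mul_of_nonneg_left h3 hγ0)
  have hMle : M ≤ ε1 + γ * (Rmax / (1 - γ) * ε2) + γ * M :=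
    Finset.sup'_le _ _ fun t _ => hMstep t
  have hMbound : M ≤ (ε1 + γ * Rmax * ε2) / (1 - γ) ^ 2 := by
    rw [le_div_iff₀ (by positivity)]
    have h1 : γ * (Rmax / (1 - γ) * ε2) * (1 - γ) = γ * Rmax * ε2 := by
      field_simp
    nlinarith [mul_le_mul_of_nonneg_right hMle h1γ.le, hM_mem s, abs_nonneg (V1 s - V2 s)]
  exact le_trans (hM_mem s) hMbound
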